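/- arXiv:2205.10899 — 3 statements merged into one kernel-verified Lean document; each statement's English description precedes it below -/
import Mathlib

section
/- Two points y, y′ ∈ ℝ^n with positive coordinates define the same evaluation homomorphism on the semiring of symmetric polynomials in n variables if and only if y′ is a coordinate permutation of y. -/
open MvPolynomial Multiset in
/-- Two points with positive coordinates define the same evaluation homomorphism on
the semiring of symmetric polynomials in `n` variables iff they differ by a coordinate
permutation. -/
theorem stmt6 (n : ℕ) (y y' : Fin n → ℝ) (hy : ∀ i, 0 < y i) (hy' : ∀ i, 0 < y' i) :
    (∀ p : MvPolynomial (Fin n) ℤ, p.IsSymmetric →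
        MvPolynomial.aeval y p = MvPolynomial.aeval y' p) ↔
      ∃ σ : Equiv.Perm (Fin n), y' = y ∘ σ := by
  constructor
  · intro h
    -- the multisets of coordinates
    set s : Multiset ℝ := Finset.univ.val.map y with hs
    set t : Multiset ℝ := Finset.univ.val.map y' with ht
    have hcard : Multiset.card s = n := by simp [hs]
    have hcard' : Multiset.card t = n := by simp [ht]
    -- elementary symmetric values agree
    have hesymm : ∀ k, s.esymm k = t.esymm k := by
      intro k
      have e1 := aeval_esymm_eq_multiset_esymm (σ := Fin n) (R := ℤ) (S := ℝ) k y
      have e2 := aeval_esymm_eq_multiset_esymm (σ := Fin n) (R := ℤ) (S := ℝ) k y'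
      rw [hs, ht, ← e1, ← e2]
      exact h _ (esymm_isSymmetric _ _ k)
    -- Vieta: the polynomials agree
    have hprod : (s.map fun a => Polynomial.X + Polynomial.C a).prod
        = (t.map fun a => Polynomial.X + Polynomial.C a).prod := by
      rw [Multiset.prod_X_add_C_eq_sum_esymm, Multiset.prod_X_add_C_eq_sum_esymm,
        hcard, hcard']
      exact Finset.sum_congr rfl fun k _ => by rw [hesymm]
    -- convert to X - C form via negation and take roots
    have key : ∀ u : Multiset ℝ, (u.map fun a => Polynomial.X + Polynomial.C a).prod
        = ((u.map Neg.neg).map fun a => Polynomial.X - Polynomial.C a).prod := by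
      intro u
      simp [Multiset.map_map, Function.comp_def, sub_neg_eq_add]
    have hroots : s.map Neg.neg = t.map Neg.neg := by
      rw [key s, key t] at hprod
      have := congrArg Polynomial.roots hprod
      rwa [Polynomial.roots_multiset_prod_X_sub_C, Polynomial.roots_multiset_prod_X_sub_C] at this
    have hst : s = t := by
      have := congrArg (Multiset.map Neg.neg) hroots
      simpa [Multiset.map_map, Function.comp] using this
    -- from multiset equality, get a permutation using sorting
    rw [hs, ht, Fin.univ_val_map, Fin.univ_val_map] at hst
    have hperm : List.Perm (List.ofFn y') (List.ofFn y) := Multiset.coe_eq_coe.mp hst.symm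
    have h1 : List.Perm (List.ofFn (y ∘ Tuple.sort y)) (List.ofFn (y' ∘ Tuple.sort y')) :=
      ((Tuple.sort y).ofFn_comp_perm y).trans
        (hperm.symm.trans ((Tuple.sort y').ofFn_comp_perm y').symm)
    have heq : y ∘ Tuple.sort y = y' ∘ Tuple.sort y' :=
      List.ofFn_injective <| List.Perm.eq_of_sortedLE
        (Tuple.monotone_sort y).sortedLE_ofFn (Tuple.monotone_sort y').sortedLE_ofFn h1
    refine ⟨(Tuple.sort y').symm.trans (Tuple.sort y), ?_⟩
    funext i
    have := congrFun heq ((Tuple.sort y').symm i)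
    simpa using this.symm
  · rintro ⟨σ, rfl⟩ p hp
    rw [show (y ∘ σ : Fin n → ℝ) = y ∘ σ from rfl, ← aeval_rename, hp σ]
end

section
/- For symmetric polynomials with nonnegative coefficients, the map sending a nonzero polynomial p = Σ_α p_α x^α to max{ Σ_i α_i y_i : p_α ≠ 0 } (for a fixed y ∈ ℝ^n), and 0 to −∞, is a semiring homomorphism into the tropical semiring (ℝ ∪ {−∞}, max, +): it sends sums to max and products to sums. -/
noncomputable section

private def tropL {n : ℕ} (y : Fin n → ℝ) (d : Fin n →₀ ℕ) : ℝ := ∑ i, (d i : ℝ) * y i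

private lemma tropL_add {n : ℕ} (y : Fin n → ℝ) (a b : Fin n →₀ ℕ) :
    tropL y (a + b) = tropL y a + tropL y b := by
  simp [tropL, add_mul, Finset.sum_add_distrib]

/-- Tropical evaluation in direction `y`: linear maximization of `Σ_i α_i y_i` over the
exponent vectors `α` of the monomials of `p` (i.e. over the Newton polytope), with the
zero polynomial sent to `⊥ = -∞`. -/
def tropEval (n : ℕ) (y : Fin n → ℝ) (p : MvPolynomial (Fin n) ℝ) : WithBot ℝ :=
  p.support.sup fun d => ((∑ i, (d i : ℝ) * y i : ℝ) : WithBot ℝ)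

private lemma tropEval_eq {n : ℕ} (y : Fin n → ℝ) (p : MvPolynomial (Fin n) ℝ) :
    tropEval n y p = p.support.sup fun d => ((tropL y d : ℝ) : WithBot ℝ) := rfl

/-- For symmetric polynomials with nonnegative coefficients, tropical evaluation is a
semiring homomorphism into the tropical reals `(ℝ ∪ {-∞}, max, +)`: it sends sums to
max and products to sums, `1` to `0` and `0` to `-∞`. -/
theorem stmt7 (n : ℕ) (y : Fin n → ℝ) (p q : MvPolynomial (Fin n) ℝ)
    (hps : p.IsSymmetric) (hqs : q.IsSymmetric)
    (hpc : ∀ d, 0 ≤ MvPolynomial.coeff d p) (hqc : ∀ d, 0 ≤ MvPolynomial.coeff d q) :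
    tropEval n y (p + q) = max (tropEval n y p) (tropEval n y q) ∧
    tropEval n y (p * q) = tropEval n y p + tropEval n y q ∧
    tropEval n y 1 = 0 ∧ tropEval n y 0 = ⊥ := by
  refine ⟨?_, ?_, ?_, ?_⟩
  · -- sum
    have hsupp : (p + q).support = p.support ∪ q.support := by
      ext d
      simp only [MvPolynomial.mem_support_iff, MvPolynomial.coeff_add, Finset.mem_union]
      rw [← not_iff_not]
      push_neg
      constructor
      · intro h; exact (add_eq_zero_iff_of_nonneg (hpc d) (hqc d)).mp h
      · rintro ⟨h1, h2⟩; simp [h1, h2]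
    simp only [tropEval, hsupp, Finset.sup_union, max_def]
  · -- product
    rcases eq_or_ne p 0 with rfl | hp
    · simp [tropEval]
    rcases eq_or_ne q 0 with rfl | hq
    · simp [tropEval]
    have hpq : p * q ≠ 0 := mul_ne_zero hp hq
    have hpne : p.support.Nonempty := MvPolynomial.support_nonempty.mpr hp
    have hqne : q.support.Nonempty := MvPolynomial.support_nonempty.mpr hq
    have hpqne : (p * q).support.Nonempty := MvPolynomial.support_nonempty.mpr hpq
    have key : ∀ (r : MvPolynomial (Fin n) ℝ) (hr : r.support.Nonempty),
        tropEval n y r = ((r.support.sup' hr (tropL y) : ℝ) : WithBot ℝ) := by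
      intro r hr
      rw [tropEval_eq, Finset.coe_sup']
      rfl
    rw [key p hpne, key q hqne, key _ hpqne, ← WithBot.coe_add, WithBot.coe_eq_coe]
    apply le_antisymm
    · apply Finset.sup'_le
      intro d hd
      have hd' := MvPolynomial.support_mul p q hd
      rw [Finset.mem_add] at hd'
      obtain ⟨a, ha, b, hb, rfl⟩ := hd'
      rw [tropL_add]
      exact add_le_add (Finset.le_sup' _ ha) (Finset.le_sup' _ hb)
    · obtain ⟨dp, hdp, hdp'⟩ := Finset.exists_mem_eq_sup' hpne (tropL y)
      obtain ⟨dq, hdq, hdq'⟩ := Finset.exists_mem_eq_sup' hqne (tropL y)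
      have hmem : dp + dq ∈ (p * q).support := by
        rw [MvPolynomial.mem_support_iff, MvPolynomial.coeff_mul]
        have hpos : 0 < MvPolynomial.coeff dp p * MvPolynomial.coeff dq q := by
          apply mul_pos
          · exact lt_of_le_of_ne (hpc dp) (Ne.symm (MvPolynomial.mem_support_iff.mp hdp))
          · exact lt_of_le_of_ne (hqc dq) (Ne.symm (MvPolynomial.mem_support_iff.mp hdq))
        have hle : MvPolynomial.coeff dp p * MvPolynomial.coeff dq q ≤
            ∑ x ∈ Finset.HasAntidiagonal.antidiagonal (dp + dq),
              MvPolynomial.coeff x.1 p * MvPolynomial.coeff x.2 q := by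
          have hmem' : (dp, dq) ∈ Finset.HasAntidiagonal.antidiagonal (dp + dq) :=
            Finset.HasAntidiagonal.mem_antidiagonal.mpr rfl
          simpa using Finset.single_le_sum (f := fun x : (Fin n →₀ ℕ) × (Fin n →₀ ℕ) =>
            MvPolynomial.coeff x.1 p * MvPolynomial.coeff x.2 q)
            (fun x _ => mul_nonneg (hpc x.1) (hqc x.2)) hmem'
        exact (hpos.trans_le hle).ne'
      calc (p.support.sup' hpne (tropL y)) + (q.support.sup' hqne (tropL y))
          = tropL y (dp + dq) := by rw [hdp', hdq', tropL_add]
        _ ≤ _ := Finset.le_sup' _ hmem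
  · -- one
    have : (1 : MvPolynomial (Fin n) ℝ).support = {0} := by
      rw [show (1 : MvPolynomial (Fin n) ℝ) = MvPolynomial.monomial 0 1 by simp,
        MvPolynomial.support_monomial]
      norm_num
    simp [tropEval, this]
  · simp [tropEval]

end
end

section
/- In a preordered commutative semiring S with 1 ≥ 0, if the inequalities defining power universality of u (namely a ≤ u^{k_a} and a·u^{k_a} ≥ 1 for suitable k_a) hold for all elements a of a generating set containing 2 = 1 + 1, and u ≥ 1, then u is power universal, i.e. the inequalities hold for all nonzero a ∈ S. -/
/-- Elements obtained from a subset `G` of a semiring by finitely many additions and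
multiplications. -/
inductive Gen {S : Type*} [CommSemiring S] (G : Set S) : S → Prop
  | base {a : S} : a ∈ G → Gen G a
  | add {a b : S} : Gen G a → Gen G b → Gen G (a + b)
  | mul {a b : S} : Gen G a → Gen G b → Gen G (a * b)

/-- In a preordered commutative semiring with `1 ≥ 0`, if `u ≥ 1` and the power
universality inequalities hold for every element of a generating set containing
`2 = 1 + 1`, then they hold for every nonzero element, i.e. `u` is power universal. -/
theorem stmt19 {S : Type*} [CommSemiring S] [Preorder S]
    (haddm : ∀ a b c : S, a ≤ b → a + c ≤ b + c)
    (hmulm : ∀ a b c : S, a ≤ b → a * c ≤ b * c)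
    (h01 : (0 : S) ≤ 1)
    (G : Set S) (hGen : ∀ a : S, a ≠ 0 → Gen G a) (h2 : (2 : S) ∈ G)
    (u : S) (hu : 1 ≤ u)
    (hG : ∀ a ∈ G, ∃ k : ℕ, a ≤ u ^ k ∧ 1 ≤ a * u ^ k) :
    ∀ a : S, a ≠ 0 → ∃ k : ℕ, a ≤ u ^ k ∧ 1 ≤ a * u ^ k := by
  have hmul' : ∀ a b c : S, a ≤ b → c * a ≤ c * b := fun a b c h => by
    rw [mul_comm c a, mul_comm c b]; exact hmulm a b c h
  have hadd' : ∀ a b c : S, a ≤ b → c + a ≤ c + b := fun a b c h => by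
    rw [add_comm c a, add_comm c b]; exact haddm a b c h
  have hone : ∀ n : ℕ, (1:S) ≤ u ^ n := by
    intro n; induction n with
    | zero => simp
    | succ n ih =>
      calc (1:S) ≤ u ^ n := ih
        _ = u ^ n * 1 := (mul_one _).symm
        _ ≤ u ^ n * u := hmul' _ _ _ hu
        _ = u ^ (n+1) := (pow_succ u n).symm
  have hpow : ∀ i j : ℕ, i ≤ j → u ^ i ≤ u ^ j := by
    intro i j hij
    calc u ^ i = u ^ i * 1 := (mul_one _).symm
      _ ≤ u ^ i * u ^ (j - i) := hmul' _ _ _ (hone _)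
      _ = u ^ j := by rw [← pow_add, Nat.add_sub_cancel' hij]
  obtain ⟨k2, h2a, -⟩ := hG 2 h2
  have key : ∀ a : S, Gen G a → ∃ k : ℕ, a ≤ u ^ k ∧ 1 ≤ a * u ^ k := by
    intro a ha
    induction ha with
    | base hm => exact hG _ hm
    | @add x y _ _ iha ihb =>
      obtain ⟨k, hk1, hk2⟩ := iha
      obtain ⟨m, hm1, hm2⟩ := ihb
      set N := k + m with hN
      refine ⟨k2 + N, ?_, ?_⟩
      · calc x + y ≤ u ^ N + y := haddm _ _ _ (hk1.trans (hpow k N (Nat.le_add_right k m)))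
          _ ≤ u ^ N + u ^ N := hadd' _ _ _ (hm1.trans (hpow m N (Nat.le_add_left m k)))
          _ = 2 * u ^ N := (two_mul _).symm
          _ ≤ u ^ k2 * u ^ N := hmulm _ _ _ h2a
          _ = u ^ (k2 + N) := (pow_add u k2 N).symm
      · have hyos : (0:S) ≤ y * u ^ (k2 + N) :=
          h01.trans (hm2.trans (hmul' _ _ _ (hpow m (k2+N) (by omega))))
        calc (1:S) ≤ x * u ^ k := hk2
          _ ≤ x * u ^ (k2 + N) := hmul' _ _ _ (hpow k (k2+N) (by omega))
          _ = x * u ^ (k2 + N) + 0 := (add_zero _).symm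
          _ ≤ x * u ^ (k2 + N) + y * u ^ (k2 + N) := hadd' _ _ _ hyos
          _ = (x + y) * u ^ (k2 + N) := (add_mul _ _ _).symm
    | @mul x y _ _ iha ihb =>
      obtain ⟨k, hk1, hk2⟩ := iha
      obtain ⟨m, hm1, hm2⟩ := ihb
      refine ⟨k + m, ?_, ?_⟩
      · calc x * y ≤ u ^ k * y := hmulm _ _ _ hk1
          _ ≤ u ^ k * u ^ m := hmul' _ _ _ hm1
          _ = u ^ (k + m) := (pow_add u k m).symm
      · calc (1:S) = 1 * 1 := (one_mul 1).symm
          _ ≤ (x * u ^ k) * 1 := hmulm _ _ _ hk2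
          _ ≤ (x * u ^ k) * (y * u ^ m) := hmul' _ _ _ hm2
          _ = (x * y) * u ^ (k + m) := by rw [pow_add]; ring

  exact fun a ha => key a (hGen a ha)
end
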